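/- If eight distinct points p_1,...,p_8 in P^3 form the complete intersection of three quadrics in P^3, then any seven of them impose independent conditions on quadrics in P^3. -/

import Mathlib

open MvPolynomial

set_option linter.unusedSectionVars false
set_option maxHeartbeats 1000000
open Finset

theorem prod_support_eq {K : Type*} [CommRing K] {k : ℕ} {d : Fin k →₀ ℕ} {i j : Fin k}
    (hij : Finsupp.toMultiset d = {i, j}) (x : Fin k → K) :
    (∏ r ∈ d.support, x r ^ d r) = x i * x j := by
  have h1 : (d.toMultiset.map x).prod = x i * x j := by rw [hij]; simp
  rw [Finsupp.toMultiset_map, Finsupp.prod_toMultiset] at h1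
  rw [Finsupp.prod_mapDomain_index (fun a => pow_zero a) (fun a m n => pow_add a m n)] at h1
  exact h1

def IsPolar {K : Type*} [Field K] {k : ℕ} (Q : MvPolynomial (Fin k) K)
    (B : (Fin k → K) → (Fin k → K) → K) : Prop :=
  (∀ x y, eval (x + y) Q = eval x Q + B x y + eval y Q) ∧
  (∀ (s : K) x, eval (s • x) Q = s^2 * eval x Q) ∧
  (∀ (s : K) x y, B (s • x) y = s * B x y) ∧
  (∀ x y z, B (x + y) z = B x z + B y z) ∧
  (∀ x y, B x y = B y x)

theorem quad_polar {K : Type*} [Field K] {k : ℕ} [NeZero k] {Q : MvPolynomial (Fin k) K}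
    (hQ : Q.IsHomogeneous 2) : ∃ B, IsPolar Q B := by
  have key : ∀ d : Fin k →₀ ℕ, ∃ i j : Fin k, d ∈ Q.support →
      ∀ x : Fin k → K, (∏ r ∈ d.support, x r ^ d r) = x i * x j := by
    intro d
    by_cases hd : d ∈ Q.support
    · have hdeg : (Finsupp.weight 1 d : ℕ) = 2 := hQ (MvPolynomial.mem_support_iff.mp hd)
      have hcard : Multiset.card d.toMultiset = 2 := by
        rw [Finsupp.card_toMultiset]
        rw [show (Finsupp.weight 1 : (Fin k →₀ ℕ) →+ ℕ) = Finsupp.weight (fun _ => 1) from rfl,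
          ← Finsupp.degree_eq_weight_one] at hdeg
        exact hdeg
      obtain ⟨i, j, hij⟩ := Multiset.card_eq_two.mp hcard
      exact ⟨i, j, fun _ x => prod_support_eq hij x⟩
    · exact ⟨0, 0, fun h => absurd h hd⟩
  choose I J hIJ using key
  have heval : ∀ x : Fin k → K,
      eval x Q = ∑ d ∈ Q.support, coeff d Q * (x (I d) * x (J d)) := by
    intro x
    rw [MvPolynomial.eval_eq]
    exact Finset.sum_congr rfl fun d hd => by rw [hIJ d hd x]
  refine ⟨fun x y => ∑ d ∈ Q.support, coeff d Q *
      (x (I d) * y (J d) + y (I d) * x (J d)), ?_, ?_, ?_, ?_, ?_⟩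
  · intro x y
    simp only [heval, Pi.add_apply, ← Finset.sum_add_distrib]
    exact Finset.sum_congr rfl fun d _ => by ring
  · intro s x
    simp only [heval, Pi.smul_apply, smul_eq_mul, Finset.mul_sum]
    exact Finset.sum_congr rfl fun d _ => by ring
  · intro s x y
    simp only [Pi.smul_apply, smul_eq_mul, Finset.mul_sum]
    exact Finset.sum_congr rfl fun d _ => by ring
  · intro x y z
    simp only [Pi.add_apply, ← Finset.sum_add_distrib]
    exact Finset.sum_congr rfl fun d _ => by ring
  · intro x y
    exact Finset.sum_congr rfl fun d _ => by ring

theorem IsPolar.combo3 {K : Type*} [Field K] {k : ℕ} {Q : MvPolynomial (Fin k) K}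
    {B : (Fin k → K) → (Fin k → K) → K} (h : IsPolar Q B) (s t u : K) (x y z : Fin k → K) :
    eval (s • x + t • y + u • z) Q =
      s^2 * eval x Q + t^2 * eval y Q + u^2 * eval z Q +
      s*t * B x y + s*u * B x z + t*u * B y z := by
  obtain ⟨hadd, hsmul, hsl, hal, hsym⟩ := h
  have hsr : ∀ (c : K) a b, B a (c • b) = c * B a b := fun c a b => by
    rw [hsym, hsl, hsym]
  have har : ∀ a b c, B a (b + c) = B a b + B a c := fun a b c => by
    rw [hsym, hal, hsym, hsym c]
  rw [add_assoc, hadd, hsmul, hadd, hsmul, hsmul, har, hsr, hsr, hsl, hsl, hsr, hsl]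
  ring


section Scalar
variable {K : Type*} [Field K]

theorem prop_of_minors {k1 k2 k3 x1 x2 x3 : K} (h12 : x1*k2 = x2*k1) (h13 : x1*k3 = x3*k1)
    (h23 : x2*k3 = x3*k2) (hk : ¬(k1 = 0 ∧ k2 = 0 ∧ k3 = 0)) :
    ∃ c, x1 = c*k1 ∧ x2 = c*k2 ∧ x3 = c*k3 := by
  by_cases hk1 : k1 ≠ 0
  · refine ⟨x1/k1, by field_simp, ?_, ?_⟩
    · field_simp; linear_combination -h12
    · field_simp; linear_combination -h13
  push_neg at hk1
  by_cases hk2 : k2 ≠ 0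
  · refine ⟨x2/k2, ?_, by field_simp, ?_⟩
    · rw [hk1, mul_zero]
      rcases mul_eq_zero.mp (h12.trans (by rw [hk1, mul_zero])) with h | h
      · exact h
      · exact absurd h hk2
    · field_simp; linear_combination -h23
  push_neg at hk2
  have hk3 : k3 ≠ 0 := fun h => hk ⟨hk1, hk2, h⟩
  refine ⟨x3/k3, ?_, ?_, by field_simp⟩
  · rw [hk1, mul_zero]
    rcases mul_eq_zero.mp (h13.trans (by rw [hk1, mul_zero])) with h | h
    · exact h
    · exact absurd h hk3
  · rw [hk2, mul_zero]
    rcases mul_eq_zero.mp (h23.trans (by rw [hk2, mul_zero])) with h | h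
    · exact h
    · exact absurd h hk3

theorem kernel_solve {r1 r2 r3 s1 s2 s3 x1 x2 x3 : K}
    (hr : r1*x1 + r2*x2 + r3*x3 = 0) (hs : s1*x1 + s2*x2 + s3*x3 = 0)
    (hk : ¬(r2*s3 - r3*s2 = 0 ∧ r3*s1 - r1*s3 = 0 ∧ r1*s2 - r2*s1 = 0)) :
    ∃ c, x1 = c*(r2*s3 - r3*s2) ∧ x2 = c*(r3*s1 - r1*s3) ∧ x3 = c*(r1*s2 - r2*s1) := by
  refine prop_of_minors ?_ ?_ ?_ hk
  · linear_combination r3*hs - s3*hr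
  · linear_combination s2*hr - r2*hs
  · linear_combination r1*hs - s1*hr
end Scalar

/-- Two nonzero vectors represent the same point of projective space:
they differ by a nonzero scalar. -/
def ProjEq {K : Type*} [Field K] {n : ℕ} (x y : Fin n → K) : Prop :=
  ∃ c : K, c ≠ 0 ∧ y = c • x

/-- A family of nonzero vectors represents pairwise distinct points
of projective space. -/
def ProjDistinct {K : Type*} [Field K] {n m : ℕ} (p : Fin m → Fin n → K) : Prop :=
  (∀ i, p i ≠ 0) ∧ ∀ i j, i ≠ j → ¬ ProjEq (p i) (p j)

/-- Eight points of `P³` (given by nonzero representative vectors) form the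
complete intersection of three quadrics: the common zero locus of three
quadratic forms is exactly the set of the eight points. -/
def IsCIofThreeQuadrics {K : Type*} [Field K] (p : Fin 8 → Fin 4 → K) : Prop :=
  ∃ Q₁ Q₂ Q₃ : MvPolynomial (Fin 4) K,
    Q₁.IsHomogeneous 2 ∧ Q₂.IsHomogeneous 2 ∧ Q₃.IsHomogeneous 2 ∧
    ∀ x : Fin 4 → K, x ≠ 0 →
      ((eval x Q₁ = 0 ∧ eval x Q₂ = 0 ∧ eval x Q₃ = 0) ↔ ∃ i, ProjEq (p i) x)

section A
variable {K : Type*} [Field K] {n m : ℕ}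

theorem pair_indep {p : Fin m → Fin n → K} (hp : ProjDistinct p) {a b : Fin m} (hab : a ≠ b) :
    LinearIndependent K ![p a, p b] := by
  rw [linearIndependent_fin2]
  refine ⟨by simpa using hp.1 b, fun c hc => ?_⟩
  rcases eq_or_ne c 0 with rfl | hc0
  · exact hp.1 a (by simpa using hc.symm)
  · exact hp.2 b a (Ne.symm hab) ⟨c, hc0, by simpa using hc.symm⟩

theorem pair_smul_indep {x y : Fin n → K} (h : LinearIndependent K ![x, y]) {a b : K}
    (ha : a ≠ 0) (hb : b ≠ 0) : LinearIndependent K ![a • x, b • y] := by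
  rw [linearIndependent_fin2] at h ⊢
  simp only [Matrix.cons_val_one, Matrix.head_cons, Matrix.cons_val_zero] at h ⊢
  refine ⟨smul_ne_zero hb h.1, fun c hc => ?_⟩
  apply h.2 (c * b / a)
  have : (c * b) • y = a • x := by rw [mul_smul, hc]
  calc (c * b / a) • y = a⁻¹ • ((c*b) • y) := by rw [smul_smul]; congr 1; field_simp
    _ = a⁻¹ • (a • x) := by rw [this]
    _ = x := by rw [smul_smul, inv_mul_cancel₀ ha, one_smul]

theorem triple_coords {x y z : Fin n → K} (h : LinearIndependent K ![x, y, z]) {r s t r' s' t' : K}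
    (heq : r • x + s • y + t • z = r' • x + s' • y + t' • z) : r = r' ∧ s = s' ∧ t = t' := by
  have h0 : (r - r') • x + (s - s') • y + (t - t') • z = 0 := by
    rw [sub_smul, sub_smul, sub_smul]
    rw [show r • x - r' • x + (s • y - s' • y) + (t • z - t' • z)
      = (r • x + s • y + t • z) - (r' • x + s' • y + t' • z) by abel, heq, sub_self]
  have := Fintype.linearIndependent_iff.mp h ![r - r', s - s', t - t'] (by
    simpa [Fin.sum_univ_three] using h0)
  refine ⟨sub_eq_zero.mp (this 0), sub_eq_zero.mp (this 1), sub_eq_zero.mp (this 2)⟩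

theorem pair_coords {x y : Fin n → K} (h : LinearIndependent K ![x, y]) {r s r' s' : K}
    (heq : r • x + s • y = r' • x + s' • y) : r = r' ∧ s = s' := by
  have h0 : (r - r') • x + (s - s') • y = 0 := by
    rw [sub_smul, sub_smul]
    rw [show r • x - r' • x + (s • y - s' • y) = (r • x + s • y) - (r' • x + s' • y) by abel,
      heq, sub_self]
  obtain ⟨h1, h2⟩ := h.eq_zero_of_pair h0
  exact ⟨sub_eq_zero.mp h1, sub_eq_zero.mp h2⟩

theorem mem_span_triple {V : Type*} [AddCommGroup V] [Module K V] {x a b c : V}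
    (h : x ∈ Submodule.span K ({a, b, c} : Set V)) :
    ∃ r s t : K, x = r • a + s • b + t • c := by
  rw [Submodule.mem_span_insert] at h
  obtain ⟨r, z, hz, hx⟩ := h
  rw [Submodule.mem_span_insert] at hz
  obtain ⟨s, w, hw, hzw⟩ := hz
  rw [Submodule.mem_span_singleton] at hw
  obtain ⟨t, ht⟩ := hw
  exact ⟨r, s, t, by rw [hx, hzw, ← ht, add_assoc]⟩

end A

section Geometry

variable {K : Type*} [Field K] [IsAlgClosed K]
variable {p : Fin 8 → Fin 4 → K} {Q₁ Q₂ Q₃ : MvPolynomial (Fin 4) K}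
variable (hQ : ∀ x : Fin 4 → K, x ≠ 0 →
      ((eval x Q₁ = 0 ∧ eval x Q₂ = 0 ∧ eval x Q₃ = 0) ↔ ∃ i, ProjEq (p i) x))

include hQ

theorem locus_pigeonhole {S : Set K} (hS : S.Infinite) (f : K → Fin 4 → K)
    (h0 : ∀ t ∈ S, f t ≠ 0)
    (hz : ∀ t ∈ S, eval (f t) Q₁ = 0 ∧ eval (f t) Q₂ = 0 ∧ eval (f t) Q₃ = 0)
    (hinj : ∀ t ∈ S, ∀ t' ∈ S, ∀ c : K, f t = c • f t' → t = t') : False := by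
  have hex : ∀ t ∈ S, ∃ i, ProjEq (p i) (f t) := fun t ht =>
    (hQ (f t) (h0 t ht)).mp (hz t ht)
  classical
  set F : K → Fin 8 := fun t => if h : ∃ i, ProjEq (p i) (f t) then h.choose else 0 with hF
  obtain ⟨x, hx, y, hy, hne, hfeq⟩ :=
    hS.exists_ne_map_eq_of_mapsTo (f := F) (Set.mapsTo_univ F S) Set.finite_univ
  have hpx : ProjEq (p (F x)) (f x) := by
    rw [hF]; simp only [dif_pos (hex x hx)]; exact (hex x hx).choose_spec
  have hpy : ProjEq (p (F y)) (f y) := by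
    rw [hF]; simp only [dif_pos (hex y hy)]; exact (hex y hy).choose_spec
  obtain ⟨c, hc0, hc⟩ := hpx
  obtain ⟨c', hc'0, hc'⟩ := hpy
  rw [hfeq] at hc
  have : f x = (c * c'⁻¹) • f y := by
    rw [hc, hc', smul_smul]
    congr 1
    field_simp
  exact hne (hinj x hx y hy _ this)

theorem no_line (hQ₁ : Q₁.IsHomogeneous 2) (hQ₂ : Q₂.IsHomogeneous 2) (hQ₃ : Q₃.IsHomogeneous 2)
    {x y : Fin 4 → K} (hxy : LinearIndependent K ![x, y])
    (hx : eval x Q₁ = 0 ∧ eval x Q₂ = 0 ∧ eval x Q₃ = 0)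
    (hy : eval y Q₁ = 0 ∧ eval y Q₂ = 0 ∧ eval y Q₃ = 0)
    (hs : eval (x + y) Q₁ = 0 ∧ eval (x + y) Q₂ = 0 ∧ eval (x + y) Q₃ = 0) : False := by
  have key : ∀ (Q : MvPolynomial (Fin 4) K), Q.IsHomogeneous 2 → eval x Q = 0 → eval y Q = 0 →
      eval (x + y) Q = 0 → ∀ t : K, eval (x + t • y) Q = 0 := by
    intro Q hQh hx0 hy0 hs0 t
    obtain ⟨B, hB⟩ := quad_polar hQh
    obtain ⟨hadd, hsmul, hsl, hal, hsym⟩ := hB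
    have hBxy : B x y = 0 := by
      have h := hadd x y
      rw [hx0, hy0, hs0] at h
      simpa using h.symm
    have h := hadd x (t • y)
    rw [hx0, hsmul, hy0, hsym, hsl, hsym, hBxy] at h
    simpa using h
  refine locus_pigeonhole hQ (Set.infinite_univ) (fun t => x + t • y) ?_ ?_ ?_
  · intro t _ h
    obtain ⟨h1, _⟩ := hxy.eq_zero_of_pair (s := 1) (t := t) (by simpa using h)
    exact one_ne_zero h1
  · intro t _
    exact ⟨key Q₁ hQ₁ hx.1 hy.1 hs.1 t, key Q₂ hQ₂ hx.2.1 hy.2.1 hs.2.1 t,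
      key Q₃ hQ₃ hx.2.2 hy.2.2 hs.2.2 t⟩
  · intro t _ t' _ c hc
    have hc2 : x + t • y = c • (x + t' • y) := hc
    have h3 : (1 - c) • x + (t - c * t') • y = (x + t • y) - c • (x + t' • y) := by module
    rw [hc2, sub_self] at h3
    obtain ⟨h1, h2⟩ := hxy.eq_zero_of_pair h3
    have hc1 : (1:K) = c := sub_eq_zero.mp h1
    have ht : t = c * t' := sub_eq_zero.mp h2
    rw [← hc1, one_mul] at ht
    exact ht

end Geometry

section Geometry2

variable {K : Type*} [Field K] [IsAlgClosed K]
variable {p : Fin 8 → Fin 4 → K} {Q₁ Q₂ Q₃ : MvPolynomial (Fin 4) K}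
variable (hp : ProjDistinct p)
variable (hQ₁ : Q₁.IsHomogeneous 2) (hQ₂ : Q₂.IsHomogeneous 2) (hQ₃ : Q₃.IsHomogeneous 2)
variable (hQ : ∀ x : Fin 4 → K, x ≠ 0 →
      ((eval x Q₁ = 0 ∧ eval x Q₂ = 0 ∧ eval x Q₃ = 0) ↔ ∃ i, ProjEq (p i) x))

include hp hQ₁ hQ₂ hQ₃ hQ

theorem point_zero (i : Fin 8) : eval (p i) Q₁ = 0 ∧ eval (p i) Q₂ = 0 ∧ eval (p i) Q₃ = 0 :=
  (hQ (p i) (hp.1 i)).mpr ⟨i, 1, one_ne_zero, (one_smul K (p i)).symm⟩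

theorem smul_point_zero {x : Fin 4 → K} (c : K)
    (hx : eval x Q₁ = 0 ∧ eval x Q₂ = 0 ∧ eval x Q₃ = 0) :
    eval (c • x) Q₁ = 0 ∧ eval (c • x) Q₂ = 0 ∧ eval (c • x) Q₃ = 0 := by
  obtain ⟨B1, h1⟩ := quad_polar hQ₁
  obtain ⟨B2, h2⟩ := quad_polar hQ₂
  obtain ⟨B3, h3⟩ := quad_polar hQ₃
  exact ⟨by rw [h1.2.1, hx.1, mul_zero], by rw [h2.2.1, hx.2.1, mul_zero],
    by rw [h3.2.1, hx.2.2, mul_zero]⟩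

/-- Fact A: no three of the eight points are collinear. -/
theorem factA {a b c : Fin 8} (hab : a ≠ b) (hac : a ≠ c) (hbc : b ≠ c) :
    LinearIndependent K ![p a, p b, p c] := by
  by_contra hdep
  obtain ⟨g, hg0, i0, hi0⟩ := Fintype.not_linearIndependent_iff.mp hdep
  rw [Fin.sum_univ_three] at hg0
  simp only [Matrix.cons_val_zero, Matrix.cons_val_one, Matrix.head_cons,
    Matrix.cons_val_two, Matrix.tail_cons] at hg0
  -- helper: from a relation with nonzero last coefficient derive False
  have key : ∀ u v w : Fin 8, u ≠ v → u ≠ w → v ≠ w → ∀ gu gv gw : K, gw ≠ 0 →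
      gu • p u + gv • p v + gw • p w = 0 → False := by
    intro u v w huv huw hvw gu gv gw hgw hrel
    have hw : p w = (-gu/gw) • p u + (-gv/gw) • p v := by
      have : gw • p w = -(gu • p u) - gv • p v := by
        rw [show -(gu • p u) - gv • p v = -(gu • p u + gv • p v) by abel]
        rw [eq_neg_iff_add_eq_zero]
        rw [← hrel]; abel
      calc p w = gw⁻¹ • (gw • p w) := by rw [smul_smul, inv_mul_cancel₀ hgw, one_smul]
        _ = gw⁻¹ • (-(gu • p u) - gv • p v) := by rw [this]
        _ = (-gu/gw) • p u + (-gv/gw) • p v := by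
            rw [smul_sub, smul_neg, smul_smul, smul_smul]
            rw [div_eq_inv_mul, div_eq_inv_mul]
            module
    set α := -gu/gw
    set β := -gv/gw
    have hα : α ≠ 0 := by
      intro h0
      rw [h0, zero_smul, zero_add] at hw
      have hβ : β ≠ 0 := by
        intro hb0; rw [hb0, zero_smul] at hw; exact hp.1 w hw
      exact hp.2 v w hvw ⟨β, hβ, hw⟩
    have hβ : β ≠ 0 := by
      intro h0
      rw [h0, zero_smul, add_zero] at hw
      exact hp.2 u w huw ⟨α, hα, hw⟩
    refine no_line hQ hQ₁ hQ₂ hQ₃ (x := α • p u) (y := β • p v)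
      (pair_smul_indep (pair_indep hp huv) hα hβ) ?_ ?_ ?_
    · exact smul_point_zero hp hQ₁ hQ₂ hQ₃ hQ α (point_zero hp hQ₁ hQ₂ hQ₃ hQ u)
    · exact smul_point_zero hp hQ₁ hQ₂ hQ₃ hQ β (point_zero hp hQ₁ hQ₂ hQ₃ hQ v)
    · rw [← hw]; exact point_zero hp hQ₁ hQ₂ hQ₃ hQ w
  -- case on which coefficient is nonzero
  fin_cases i0
  · simp only at hi0
    exact key b c a (Ne.symm hbc).symm (Ne.symm hab) (Ne.symm hac) (g 1) (g 2) (g 0) hi0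
      (by rw [show g 1 • p b + g 2 • p c + g 0 • p a = g 0 • p a + g 1 • p b + g 2 • p c by abel]; exact hg0)
  · simp only at hi0
    exact key a c b hac hab (Ne.symm hbc) (g 0) (g 2) (g 1) hi0 (by rw [show g 0 • p a + g 2 • p c + g 1 • p b = g 0 • p a + g 1 • p b + g 2 • p c by abel]; exact hg0)
  · simp only at hi0
    exact key a b c hab hac hbc (g 0) (g 1) (g 2) hi0 hg0

end Geometry2

section Geometry3

variable {K : Type*} [Field K] [IsAlgClosed K]
variable {p : Fin 8 → Fin 4 → K} {Q₁ Q₂ Q₃ : MvPolynomial (Fin 4) K}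
variable (hp : ProjDistinct p)
variable (hQ₁ : Q₁.IsHomogeneous 2) (hQ₂ : Q₂.IsHomogeneous 2) (hQ₃ : Q₃.IsHomogeneous 2)
variable (hQ : ∀ x : Fin 4 → K, x ≠ 0 →
      ((eval x Q₁ = 0 ∧ eval x Q₂ = 0 ∧ eval x Q₃ = 0) ↔ ∃ i, ProjEq (p i) x))

include hp hQ₁ hQ₂ hQ₃ hQ

/-- Fact B: no five of the eight points lie in a common 3-dimensional subspace. -/
theorem factB {a b c d e : Fin 8} (hab : a ≠ b) (hac : a ≠ c) (had : a ≠ d) (hae : a ≠ e)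
    (hbc : b ≠ c) (hbd : b ≠ d) (hbe : b ≠ e) (hcd : c ≠ d) (hce : c ≠ e) (hde : d ≠ e)
    (hdm : p d ∈ Submodule.span K ({p a, p b, p c} : Set (Fin 4 → K)))
    (hem : p e ∈ Submodule.span K ({p a, p b, p c} : Set (Fin 4 → K))) : False := by
  obtain ⟨d0, d1, d2, hd'⟩ := mem_span_triple hdm
  obtain ⟨e0, e1, e2, he'⟩ := mem_span_triple hem
  have coordNZ : ∀ u v w : Fin 8, u ≠ v → u ≠ w → v ≠ w → ∀ r s : K,
      p u = r • p v + s • p w → False := by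
    intro u v w huv huw hvw r s hrel
    have hind := factA hp hQ₁ hQ₂ hQ₃ hQ huv huw hvw
    have h0 : ∑ i, (![1, -r, -s] : Fin 3 → K) i • ![p u, p v, p w] i = 0 := by
      simp only [Fin.sum_univ_three, Matrix.cons_val_zero, Matrix.cons_val_one,
        Matrix.head_cons, Matrix.cons_val_two, Matrix.tail_cons, one_smul, neg_smul]
      rw [hrel]; abel
    have := Fintype.linearIndependent_iff.mp hind _ h0 0
    simp at this
  have hd0 : d0 ≠ 0 := fun h =>
    coordNZ d b c (Ne.symm hbd) (Ne.symm hcd) hbc d1 d2 (by rw [hd', h, zero_smul, zero_add])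
  have hd1 : d1 ≠ 0 := fun h =>
    coordNZ d a c (Ne.symm had) (Ne.symm hcd) hac d0 d2 (by rw [hd', h, zero_smul, add_zero])
  have hd2 : d2 ≠ 0 := fun h =>
    coordNZ d a b (Ne.symm had) (Ne.symm hbd) hab d0 d1 (by rw [hd', h, zero_smul, add_zero])
  have he0 : e0 ≠ 0 := fun h =>
    coordNZ e b c (Ne.symm hbe) (Ne.symm hce) hbc e1 e2 (by rw [he', h, zero_smul, zero_add])
  have he1 : e1 ≠ 0 := fun h =>
    coordNZ e a c (Ne.symm hae) (Ne.symm hce) hac e0 e2 (by rw [he', h, zero_smul, add_zero])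
  have he2 : e2 ≠ 0 := fun h =>
    coordNZ e a b (Ne.symm hae) (Ne.symm hbe) hab e0 e1 (by rw [he', h, zero_smul, add_zero])
  have pza := point_zero hp hQ₁ hQ₂ hQ₃ hQ a
  have pzb := point_zero hp hQ₁ hQ₂ hQ₃ hQ b
  have pzc := point_zero hp hQ₁ hQ₂ hQ₃ hQ c
  have pzd := point_zero hp hQ₁ hQ₂ hQ₃ hQ d
  have pze := point_zero hp hQ₁ hQ₂ hQ₃ hQ e
  obtain ⟨B1, hB1⟩ := quad_polar hQ₁
  obtain ⟨B2, hB2⟩ := quad_polar hQ₂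
  obtain ⟨B3, hB3⟩ := quad_polar hQ₃
  have hF1 : ∀ s t u : K, eval (s • p a + t • p b + u • p c) Q₁
      = s*t*(B1 (p a) (p b)) + s*u*(B1 (p a) (p c)) + t*u*(B1 (p b) (p c)) := by
    intro s t u; rw [hB1.combo3, pza.1, pzb.1, pzc.1]; ring
  have hF2 : ∀ s t u : K, eval (s • p a + t • p b + u • p c) Q₂
      = s*t*(B2 (p a) (p b)) + s*u*(B2 (p a) (p c)) + t*u*(B2 (p b) (p c)) := by
    intro s t u; rw [hB2.combo3, pza.2.1, pzb.2.1, pzc.2.1]; ring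
  have hF3 : ∀ s t u : K, eval (s • p a + t • p b + u • p c) Q₃
      = s*t*(B3 (p a) (p b)) + s*u*(B3 (p a) (p c)) + t*u*(B3 (p b) (p c)) := by
    intro s t u; rw [hB3.combo3, pza.2.2, pzb.2.2, pzc.2.2]; ring
  have hrd1 : (d0*d1)*(B1 (p a) (p b)) + (d0*d2)*(B1 (p a) (p c)) + (d1*d2)*(B1 (p b) (p c)) = 0 := by
    have h := pzd.1; rw [hd', hF1] at h; linear_combination h
  have hrd2 : (d0*d1)*(B2 (p a) (p b)) + (d0*d2)*(B2 (p a) (p c)) + (d1*d2)*(B2 (p b) (p c)) = 0 := by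
    have h := pzd.2.1; rw [hd', hF2] at h; linear_combination h
  have hrd3 : (d0*d1)*(B3 (p a) (p b)) + (d0*d2)*(B3 (p a) (p c)) + (d1*d2)*(B3 (p b) (p c)) = 0 := by
    have h := pzd.2.2; rw [hd', hF3] at h; linear_combination h
  have hre1 : (e0*e1)*(B1 (p a) (p b)) + (e0*e2)*(B1 (p a) (p c)) + (e1*e2)*(B1 (p b) (p c)) = 0 := by
    have h := pze.1; rw [he', hF1] at h; linear_combination h
  have hre2 : (e0*e1)*(B2 (p a) (p b)) + (e0*e2)*(B2 (p a) (p c)) + (e1*e2)*(B2 (p b) (p c)) = 0 := by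
    have h := pze.2.1; rw [he', hF2] at h; linear_combination h
  have hre3 : (e0*e1)*(B3 (p a) (p b)) + (e0*e2)*(B3 (p a) (p c)) + (e1*e2)*(B3 (p b) (p c)) = 0 := by
    have h := pze.2.2; rw [he', hF3] at h; linear_combination h
  have hindbc := pair_indep hp hbc
  have hindabc := factA hp hQ₁ hQ₂ hQ₃ hQ hab hac hbc
  -- main case split on the cross product of the two coefficient rows
  have final : ∀ k1 k2 k3 c1 c2 c3 : K, ¬(k1 = 0 ∧ k2 = 0 ∧ k3 = 0) →
      B1 (p a) (p b) = c1*k1 → B1 (p a) (p c) = c1*k2 → B1 (p b) (p c) = c1*k3 →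
      B2 (p a) (p b) = c2*k1 → B2 (p a) (p c) = c2*k2 → B2 (p b) (p c) = c2*k3 →
      B3 (p a) (p b) = c3*k1 → B3 (p a) (p c) = c3*k2 → B3 (p b) (p c) = c3*k3 → False := by
    intro k1 k2 k3 c1 c2 c3 hknz h11 h12 h13 h21 h22 h23 h31 h32 h33
    by_cases hk23 : k2 = 0 ∧ k3 = 0
    · refine locus_pigeonhole hQ Set.infinite_univ
        (fun t => (0:K) • p a + t • p b + (1:K) • p c) ?_ ?_ ?_
      · intro t _ h
        replace h : (0:K) • p a + t • p b + (1:K) • p c = 0 := h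
        have h' : (0:K) • p a + t • p b + (1:K) • p c
            = (0:K) • p a + (0:K) • p b + (0:K) • p c := by rw [h]; simp
        have := (triple_coords hindabc h').2.2
        simpa using this
      · intro t _
        refine ⟨?_, ?_, ?_⟩
        · rw [hF1, h11, h12, h13, hk23.1, hk23.2]; ring
        · rw [hF2, h21, h22, h23, hk23.1, hk23.2]; ring
        · rw [hF3, h31, h32, h33, hk23.1, hk23.2]; ring
      · intro t _ t' _ cc hcc
        replace hcc : (0:K) • p a + t • p b + (1:K) • p c
            = cc • ((0:K) • p a + t' • p b + (1:K) • p c) := hcc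
        have hcc2 : (0:K) • p a + t • p b + (1:K) • p c
            = (cc*0) • p a + (cc*t') • p b + (cc*1) • p c := by
          rw [hcc, smul_add, smul_add, smul_smul, smul_smul, smul_smul]
        obtain ⟨-, h2, h3⟩ := triple_coords hindabc hcc2
        rw [mul_one] at h3
        rw [h2, ← h3, one_mul]
    · have hfin : ({t : K | k2 + t*k3 = 0}).Finite := by
        by_cases hk3 : k3 = 0
        · have hk2 : k2 ≠ 0 := fun h => hk23 ⟨h, hk3⟩
          convert Set.finite_empty (α := K)
          ext t; simp [hk3, hk2]
        · apply Set.Finite.subset (Set.finite_singleton (-k2/k3))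
          intro t ht
          simp only [Set.mem_setOf_eq] at ht
          simp only [Set.mem_singleton_iff]
          field_simp
          linear_combination ht
      have hS : ({t : K | k2 + t*k3 ≠ 0}).Infinite := by
        have h := hfin.infinite_compl
        rwa [show {t : K | k2 + t*k3 = 0}ᶜ = {t : K | k2 + t*k3 ≠ 0} by ext t; simp] at h
      refine locus_pigeonhole hQ hS
        (fun t => (1:K) • p a + t • p b + (-(t*k1)/(k2 + t*k3)) • p c) ?_ ?_ ?_
      · intro t _ h
        replace h : (1:K) • p a + t • p b + (-(t*k1)/(k2 + t*k3)) • p c = 0 := h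
        have h' : (1:K) • p a + t • p b + (-(t*k1)/(k2 + t*k3)) • p c
            = (0:K) • p a + (0:K) • p b + (0:K) • p c := by rw [h]; simp
        have := (triple_coords hindabc h').1
        simpa using this
      · intro t ht
        have hne : k2 + t*k3 ≠ 0 := ht
        refine ⟨?_, ?_, ?_⟩
        · rw [hF1, h11, h12, h13]; field_simp; ring
        · rw [hF2, h21, h22, h23]; field_simp; ring
        · rw [hF3, h31, h32, h33]; field_simp; ring
      · intro t ht t' ht' cc hcc
        replace hcc : (1:K) • p a + t • p b + (-(t*k1)/(k2 + t*k3)) • p c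
            = cc • ((1:K) • p a + t' • p b + (-(t'*k1)/(k2 + t'*k3)) • p c) := hcc
        have hcc2 : (1:K) • p a + t • p b + (-(t*k1)/(k2 + t*k3)) • p c
            = (cc*1) • p a + (cc*t') • p b + (cc*(-(t'*k1)/(k2 + t'*k3))) • p c := by
          rw [hcc, smul_add, smul_add, smul_smul, smul_smul, smul_smul]
        obtain ⟨h1, h2, -⟩ := triple_coords hindabc hcc2
        rw [mul_one] at h1
        rw [h2, ← h1, one_mul]
  by_cases hprop : ((d0*d2)*(e1*e2) - (d1*d2)*(e0*e2) = 0 ∧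
      (d1*d2)*(e0*e1) - (d0*d1)*(e1*e2) = 0 ∧ (d0*d1)*(e0*e2) - (d0*d2)*(e0*e1) = 0)
  · -- rows proportional : p e proportional to p d, contradiction
    have hA : d1*e2 = d2*e1 := by
      apply mul_left_cancel₀ (mul_ne_zero hd0 he0)
      linear_combination hprop.2.2
    have hB : d2*e0 = d0*e2 := by
      apply mul_left_cancel₀ (mul_ne_zero hd1 he1)
      linear_combination hprop.2.1
    have he0eq : e0 = (e2/d2)*d0 := by field_simp; linear_combination hB
    have he1eq : e1 = (e2/d2)*d1 := by field_simp; linear_combination -hA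
    have he2eq : e2 = (e2/d2)*d2 := (div_mul_cancel₀ e2 hd2).symm
    refine hp.2 d e hde ⟨e2/d2, div_ne_zero he2 hd2, ?_⟩
    rw [he', hd']
    match_scalars
    · linear_combination he0eq
    · linear_combination he1eq
    · linear_combination he2eq
  · obtain ⟨c1, h11, h12, h13⟩ := kernel_solve hrd1 hre1 hprop
    obtain ⟨c2, h21, h22, h23⟩ := kernel_solve hrd2 hre2 hprop
    obtain ⟨c3, h31, h32, h33⟩ := kernel_solve hrd3 hre3 hprop
    exact final _ _ _ c1 c2 c3 hprop h11 h12 h13 h21 h22 h23 h31 h32 h33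

end Geometry3


theorem good_partition {ι : Type*} [DecidableEq ι] (s : Finset ι) (hs : s.card = 6)
    (Bad : Finset ι → Prop)
    (hpair : ∀ A A', A ⊆ s → A' ⊆ s → A.card = 3 → A'.card = 3 → Bad A → Bad A' → A ≠ A' →
      (A ∩ A').card ≤ 1) :
    ∃ A, A ⊆ s ∧ A.card = 3 ∧ ¬Bad A ∧ ¬Bad (s \ A) := by
  classical
  by_contra hcon
  push_neg at hcon
  -- every 3-subset or its complement is bad
  have hblock : ∀ A, A ⊆ s → A.card = 3 → Bad A ∨ Bad (s \ A) := by
    intro A h1 h2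
    by_cases hA : Bad A
    · exact Or.inl hA
    · exact Or.inr (hcon A h1 h2 hA)
  obtain ⟨x₀, hx₀⟩ : ∃ x, x ∈ s := Finset.card_pos.mp (by omega) |>.exists_mem
  set S : Finset (Finset ι) := (s.powersetCard 3).filter Bad with hSdef
  have hSmem : ∀ A, A ∈ S ↔ (A ⊆ s ∧ A.card = 3 ∧ Bad A) := by
    intro A
    simp [hSdef, Finset.mem_powersetCard, and_assoc]
  -- |S| ≤ 5
  have hcard5 : 3 * S.card ≤ 15 := by
    have hdisj : ∀ A ∈ S, ∀ A' ∈ S, A ≠ A' →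
        Disjoint (A.powersetCard 2) (A'.powersetCard 2) := by
      intro A hA A' hA' hne
      rw [Finset.disjoint_left]
      intro P hP hP'
      rw [Finset.mem_powersetCard] at hP hP'
      obtain ⟨hA1, hA2, hA3⟩ := hSmem A |>.mp hA
      obtain ⟨hA1', hA2', hA3'⟩ := hSmem A' |>.mp hA'
      have hsub : P ⊆ A ∩ A' := Finset.subset_inter hP.1 hP'.1
      have := Finset.card_le_card hsub
      have := hpair A A' hA1 hA1' hA2 hA2' hA3 hA3' hne
      omega
    have hbiun : (S.biUnion fun A => A.powersetCard 2) ⊆ s.powersetCard 2 := by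
      intro P hP
      rw [Finset.mem_biUnion] at hP
      obtain ⟨A, hA, hPA⟩ := hP
      rw [Finset.mem_powersetCard] at hPA ⊢
      exact ⟨hPA.1.trans (hSmem A |>.mp hA).1, hPA.2⟩
    have h1 := Finset.card_biUnion hdisj
    have h2 := Finset.card_le_card hbiun
    rw [h1] at h2
    have h3 : ∀ A ∈ S, (A.powersetCard 2).card = 3 := by
      intro A hA
      rw [Finset.card_powersetCard, (hSmem A |>.mp hA).2.1]; decide
    rw [Finset.sum_congr rfl h3, Finset.sum_const, smul_eq_mul] at h2
    have h4 : (s.powersetCard 2).card = 15 := by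
      rw [Finset.card_powersetCard, hs]; decide
    omega
  -- the ten partitions inject into S
  have hten : 10 ≤ S.card := by
    set T : Finset (Finset ι) := ((s.erase x₀).powersetCard 2).image (insert x₀) with hTdef
    have hTmem : ∀ A ∈ T, x₀ ∈ A ∧ A ⊆ s ∧ A.card = 3 := by
      intro A hA
      rw [hTdef, Finset.mem_image] at hA
      obtain ⟨B, hB, rfl⟩ := hA
      rw [Finset.mem_powersetCard] at hB
      have hx₀B : x₀ ∉ B := fun h => (Finset.mem_erase.mp (hB.1 h)).1 rfl
      refine ⟨Finset.mem_insert_self _ _, ?_, ?_⟩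
      · intro z hz
        rcases Finset.mem_insert.mp hz with rfl | hz
        · exact hx₀
        · exact Finset.mem_of_mem_erase (hB.1 hz)
      · rw [Finset.card_insert_of_notMem hx₀B, hB.2]
    have hTcard : T.card = 10 := by
      rw [hTdef, Finset.card_image_of_injOn, Finset.card_powersetCard,
        Finset.card_erase_of_mem hx₀, hs]
      · decide
      · intro B hB B' hB' hBB'
        rw [Finset.mem_coe, Finset.mem_powersetCard] at hB hB'
        have hxB : x₀ ∉ B := fun h => (Finset.mem_erase.mp (hB.1 h)).1 rfl
        have hxB' : x₀ ∉ B' := fun h => (Finset.mem_erase.mp (hB'.1 h)).1 rfl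
        rw [← Finset.erase_insert hxB, ← Finset.erase_insert hxB', hBB']
    -- injection from T into S
    have hinj : ∀ A ∈ T, ∀ A' ∈ T,
        (if Bad A then A else s \ A) = (if Bad A' then A' else s \ A') → A = A' := by
      intro A hA A' hA' heq
      obtain ⟨hxA, hAs, hA3⟩ := hTmem A hA
      obtain ⟨hxA', hAs', hA3'⟩ := hTmem A' hA'
      by_cases h1 : Bad A <;> by_cases h2 : Bad A' <;>
        simp only [h1, h2, if_true, if_false, if_pos, if_neg, not_false_iff] at heq
      · exact heq
      · exfalso
        have : x₀ ∈ s \ A' := heq ▸ hxA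
        exact (Finset.mem_sdiff.mp this).2 hxA'
      · exfalso
        have : x₀ ∈ s \ A := heq.symm ▸ hxA'
        exact (Finset.mem_sdiff.mp this).2 hxA
      · have h := congrArg (s \ ·) heq
        simpa [Finset.sdiff_sdiff_eq_self hAs, Finset.sdiff_sdiff_eq_self hAs'] using h
    have hmapsto : ∀ A ∈ T, (if Bad A then A else s \ A) ∈ S := by
      intro A hA
      obtain ⟨hxA, hAs, hA3⟩ := hTmem A hA
      by_cases h1 : Bad A
      · rw [if_pos h1, hSmem]; exact ⟨hAs, hA3, h1⟩
      · rw [if_neg h1, hSmem]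
        refine ⟨Finset.sdiff_subset, ?_, hcon A hAs hA3 h1⟩
        rw [Finset.card_sdiff_of_subset hAs, hs, hA3]
      
    have := Finset.card_le_card_of_injOn _ hmapsto hinj
    omega
  omega


theorem exists_linear_form {K : Type*} [Field K] {v : Fin 4 → Fin 4 → K}
    (h : LinearIndependent K v) :
    ∃ L : MvPolynomial (Fin 4) K, L.IsHomogeneous 1 ∧ eval (v 0) L = 1 ∧
      ∀ r : Fin 4, r ≠ 0 → eval (v r) L = 0 := by
  have card_eq : Fintype.card (Fin 4) = Module.finrank K (Fin 4 → K) := by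
    simp [Module.finrank_fin_fun]
  let bas := basisOfLinearIndependentOfCardEqFinrank h card_eq
  have hbas : ⇑bas = v := coe_basisOfLinearIndependentOfCardEqFinrank h card_eq
  set ℓ : (Fin 4 → K) →ₗ[K] K := bas.coord 0 with hℓ
  refine ⟨∑ r : Fin 4, C (ℓ (Pi.single r 1)) * X r, ?_, ?_, ?_⟩
  · apply MvPolynomial.IsHomogeneous.sum
    intro r _
    simpa using (isHomogeneous_C _ (ℓ (Pi.single r 1))).mul (isHomogeneous_X _ r)
  · have heval : eval (v 0) (∑ r : Fin 4, C (ℓ (Pi.single r 1)) * X r) = ℓ (v 0) := by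
      rw [map_sum, LinearMap.pi_apply_eq_sum_univ ℓ (v 0)]
      refine Finset.sum_congr rfl fun r _ => ?_
      rw [eval_mul, eval_C, eval_X, smul_eq_mul, mul_comm]
      congr 2
      funext j
      simp [Pi.single_apply, eq_comm]
    rw [heval, ← hbas, hℓ]
    simp [Module.Basis.coord_apply]
  · intro r hr
    have heval : eval (v r) (∑ q : Fin 4, C (ℓ (Pi.single q 1)) * X q) = ℓ (v r) := by
      rw [map_sum, LinearMap.pi_apply_eq_sum_univ ℓ (v r)]
      refine Finset.sum_congr rfl fun q _ => ?_
      rw [eval_mul, eval_C, eval_X, smul_eq_mul, mul_comm]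
      congr 2
      funext j
      simp [Pi.single_apply, eq_comm]
    rw [heval, ← hbas, hℓ]
    simp [Module.Basis.coord_apply]
    exact Finsupp.single_eq_of_ne' hr

section Geometry4

variable {K : Type*} [Field K] [IsAlgClosed K]
variable {p : Fin 8 → Fin 4 → K} {Q₁ Q₂ Q₃ : MvPolynomial (Fin 4) K}
variable (hp : ProjDistinct p)
variable (hQ₁ : Q₁.IsHomogeneous 2) (hQ₂ : Q₂.IsHomogeneous 2) (hQ₃ : Q₃.IsHomogeneous 2)
variable (hQ : ∀ x : Fin 4 → K, x ≠ 0 →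
      ((eval x Q₁ = 0 ∧ eval x Q₂ = 0 ∧ eval x Q₃ = 0) ↔ ∃ i, ProjEq (p i) x))

include hp hQ₁ hQ₂ hQ₃ hQ

theorem sep {i j : Fin 8} (hij : j ≠ i) :
    ∃ N : MvPolynomial (Fin 4) K, N.IsHomogeneous 2 ∧ eval (p j) N = 1 ∧
      ∀ k, k ≠ i → k ≠ j → eval (p k) N = 0 := by
  classical
  set s : Finset (Fin 8) := (Finset.univ.erase i).erase j with hsdef
  have h7 : (Finset.univ.erase i).card = 7 := by
    rw [Finset.card_erase_of_mem (Finset.mem_univ i)]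
    simp
  have hscard : s.card = 6 := by
    rw [hsdef, Finset.card_erase_of_mem (Finset.mem_erase.mpr ⟨hij, Finset.mem_univ j⟩), h7]
  have hmem : ∀ k, k ∈ s ↔ (k ≠ j ∧ k ≠ i) := by
    intro k; simp [hsdef]
  have hjs : j ∉ s := fun h => ((hmem j).mp h).1 rfl
  set Bad : Finset (Fin 8) → Prop := fun A => p j ∈ Submodule.span K (p '' ↑A) with hBad
  -- a bad triple {x,y,z} gives p z ∈ span {p j, p x, p y}
  have badspan : ∀ x y z : Fin 8, x ∈ s → y ∈ s → z ∈ s → x ≠ y → x ≠ z → y ≠ z →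
      Bad ({x, y, z} : Finset (Fin 8)) →
      p z ∈ Submodule.span K ({p j, p x, p y} : Set (Fin 4 → K)) := by
    intro x y z hxs hys hzs hxy hxz hyz hb
    rw [hBad] at hb
    simp only [Finset.coe_insert, Finset.coe_singleton, Set.image_insert_eq,
      Set.image_singleton] at hb
    obtain ⟨a, b, c, hj'⟩ := mem_span_triple hb
    have hc : c ≠ 0 := by
      intro h0
      rw [h0, zero_smul, add_zero] at hj'
      have hindjxy := factA hp hQ₁ hQ₂ hQ₃ hQ (a := j) (b := x) (c := y)
        (Ne.symm ((hmem x).mp hxs).1) (Ne.symm ((hmem y).mp hys).1) hxy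
      have h0' : ∑ r, (![1, -a, -b] : Fin 3 → K) r • ![p j, p x, p y] r = 0 := by
        simp only [Fin.sum_univ_three, Matrix.cons_val_zero, Matrix.cons_val_one,
          Matrix.head_cons, Matrix.cons_val_two, Matrix.tail_cons, one_smul, neg_smul]
        rw [hj']; abel
      have := Fintype.linearIndependent_iff.mp hindjxy _ h0' 0
      simp at this
    have hz' : p z = c⁻¹ • p j - (a/c) • p x - (b/c) • p y := by
      have h1 : c • p z = p j - a • p x - b • p y := by rw [hj']; abel
      calc p z = c⁻¹ • (c • p z) := by rw [smul_smul, inv_mul_cancel₀ hc, one_smul]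
        _ = c⁻¹ • (p j - a • p x - b • p y) := by rw [h1]
        _ = c⁻¹ • p j - (a/c) • p x - (b/c) • p y := by
            rw [smul_sub, smul_sub, smul_smul, smul_smul, div_eq_inv_mul, div_eq_inv_mul]
    rw [hz']
    have hj0 : p j ∈ Submodule.span K ({p j, p x, p y} : Set (Fin 4 → K)) :=
      Submodule.subset_span (by simp)
    have hx0 : p x ∈ Submodule.span K ({p j, p x, p y} : Set (Fin 4 → K)) :=
      Submodule.subset_span (by simp)
    have hy0 : p y ∈ Submodule.span K ({p j, p x, p y} : Set (Fin 4 → K)) :=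
      Submodule.subset_span (by simp)
    exact Submodule.sub_mem _ (Submodule.sub_mem _ (Submodule.smul_mem _ _ hj0)
      (Submodule.smul_mem _ _ hx0)) (Submodule.smul_mem _ _ hy0)
  have hpair : ∀ A A', A ⊆ s → A' ⊆ s → A.card = 3 → A'.card = 3 → Bad A → Bad A' → A ≠ A' →
      (A ∩ A').card ≤ 1 := by
    intro A A' hAs hA's hA3 hA'3 hbA hbA' hne
    by_contra hcc
    push_neg at hcc
    obtain ⟨x, hx, y, hy, hxy⟩ := Finset.one_lt_card.mp hcc
    have hxA := (Finset.mem_inter.mp hx).1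
    have hxA' := (Finset.mem_inter.mp hx).2
    have hyA := (Finset.mem_inter.mp hy).1
    have hyA' := (Finset.mem_inter.mp hy).2
    -- third elements
    have hthird : ∀ B : Finset (Fin 8), B.card = 3 → x ∈ B → y ∈ B →
        ∃ z, z ≠ x ∧ z ≠ y ∧ B = {x, y, z} := by
      intro B hB3 hxB hyB
      have hsub : ({x, y} : Finset (Fin 8)) ⊆ B := by
        intro w hw; rcases Finset.mem_insert.mp hw with rfl | hw
        · exact hxB
        · rw [Finset.mem_singleton.mp hw]; exact hyB
      have hxy2 : ({x, y} : Finset (Fin 8)).card = 2 := by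
        rw [Finset.card_insert_of_notMem (by simpa using hxy), Finset.card_singleton]
      have h1 : (B \ {x, y}).card = 1 := by
        rw [Finset.card_sdiff_of_subset hsub, hB3, hxy2]
      obtain ⟨z, hz⟩ := Finset.card_eq_one.mp h1
      have hzmem : z ∈ B \ ({x, y} : Finset (Fin 8)) := hz ▸ Finset.mem_singleton_self z
      rw [Finset.mem_sdiff] at hzmem
      have hzx : z ≠ x := fun h => hzmem.2 (by rw [h]; simp)
      have hzy : z ≠ y := fun h => hzmem.2 (by rw [h]; simp)
      refine ⟨z, hzx, hzy, (Finset.eq_of_subset_of_card_le ?_ ?_).symm⟩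
      · intro w hw
        rcases Finset.mem_insert.mp hw with rfl | hw
        · exact hxB
        rcases Finset.mem_insert.mp hw with rfl | hw
        · exact hyB
        · rw [Finset.mem_singleton.mp hw]; exact hzmem.1
      · rw [hB3]
        rw [Finset.card_insert_of_notMem (by simp [Ne.symm hzx, hxy]),
          Finset.card_insert_of_notMem (by simpa using Ne.symm hzy),
          Finset.card_singleton]
    obtain ⟨z, hzx, hzy, hAeq⟩ := hthird A hA3 hxA hyA
    obtain ⟨z', hz'x, hz'y, hA'eq⟩ := hthird A' hA'3 hxA' hyA'
    have hzz' : z ≠ z' := by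
      intro h
      apply hne
      rw [hAeq, hA'eq, h]
    have hzs : z ∈ s := hAs (by rw [hAeq]; simp)
    have hz's : z' ∈ s := hA's (by rw [hA'eq]; simp)
    have hxs : x ∈ s := hAs hxA
    have hys : y ∈ s := hAs hyA
    have hm1 := badspan x y z hxs hys hzs hxy (Ne.symm hzx) (Ne.symm hzy) (hAeq ▸ hbA)
    have hm2 := badspan x y z' hxs hys hz's hxy (Ne.symm hz'x) (Ne.symm hz'y) (hA'eq ▸ hbA')
    exact factB hp hQ₁ hQ₂ hQ₃ hQ
      (Ne.symm ((hmem x).mp hxs).1) (Ne.symm ((hmem y).mp hys).1)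
      (Ne.symm ((hmem z).mp hzs).1) (Ne.symm ((hmem z').mp hz's).1)
      hxy (Ne.symm hzx) (Ne.symm hz'x) (Ne.symm hzy) (Ne.symm hz'y) hzz' hm1 hm2
  obtain ⟨A, hAs, hA3, hgA, hgA'⟩ := good_partition s hscard Bad hpair
  -- build a linear form for each half
  have buildL : ∀ T, T ⊆ s → T.card = 3 → ¬Bad T → ∃ L : MvPolynomial (Fin 4) K,
      L.IsHomogeneous 1 ∧ eval (p j) L = 1 ∧ ∀ k ∈ T, eval (p k) L = 0 := by
    intro T hTs hT3 hbT
    obtain ⟨x, y, z, hxy, hxz, hyz, hTeq⟩ := Finset.card_eq_three.mp hT3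
    have hxs : x ∈ s := hTs (by rw [hTeq]; simp)
    have hys : y ∈ s := hTs (by rw [hTeq]; simp)
    have hzs : z ∈ s := hTs (by rw [hTeq]; simp)
    have hindT : LinearIndependent K ![p x, p y, p z] :=
      factA hp hQ₁ hQ₂ hQ₃ hQ hxy hxz hyz
    have hnotin : p j ∉ Submodule.span K (Set.range ![p x, p y, p z]) := by
      have hrange : Set.range ![p x, p y, p z] = (p '' ↑T) := by
        rw [hTeq]
        simp only [Finset.coe_insert, Finset.coe_singleton, Set.image_insert_eq,
          Set.image_singleton]
        ext w
        simp only [Matrix.range_cons, Matrix.range_empty, Set.union_empty, Set.union_singleton,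
          Set.mem_insert_iff, Set.mem_singleton_iff, Set.mem_union, Set.mem_setOf_eq]
        tauto
      rw [hrange]
      exact hbT
    have hind4 : LinearIndependent K ![p j, p x, p y, p z] :=
      linearIndependent_fin_cons.mpr ⟨hindT, hnotin⟩
    obtain ⟨L, hL1, hLj, hLk⟩ := exists_linear_form hind4
    refine ⟨L, hL1, by simpa using hLj, ?_⟩
    intro k hk
    rw [hTeq] at hk
    rcases Finset.mem_insert.mp hk with rfl | hk
    · simpa using hLk 1 (by decide)
    rcases Finset.mem_insert.mp hk with rfl | hk
    · simpa using hLk 2 (by decide)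
    · rw [Finset.mem_singleton.mp hk]
      simpa using hLk 3 (by decide)
  have hsA : (s \ A).card = 3 := by
    rw [Finset.card_sdiff_of_subset hAs, hscard, hA3]
  obtain ⟨L1, hL11, hL1j, hL1k⟩ := buildL A hAs hA3 hgA
  obtain ⟨L2, hL21, hL2j, hL2k⟩ := buildL (s \ A) Finset.sdiff_subset hsA hgA'
  refine ⟨L1 * L2, by simpa using hL11.mul hL21, by rw [eval_mul, hL1j, hL2j, one_mul], ?_⟩
  intro k hki hkj
  have hks : k ∈ s := (hmem k).mpr ⟨hkj, hki⟩
  by_cases hkA : k ∈ A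
  · rw [eval_mul, hL1k k hkA, zero_mul]
  · rw [eval_mul, hL2k k (Finset.mem_sdiff.mpr ⟨hks, hkA⟩), mul_zero]

end Geometry4

/-- If eight distinct points of `P³` form the complete
intersection of three quadrics, then any seven of them impose independent
conditions on quadrics of `P³`. -/
theorem seven_of_eight_ci_points_independent {K : Type*} [Field K] [IsAlgClosed K]
    (p : Fin 8 → Fin 4 → K) (hp : ProjDistinct p) (hci : IsCIofThreeQuadrics p) :
    ∀ i : Fin 8, ∀ v : Fin 8 → K, ∃ Q : MvPolynomial (Fin 4) K,
      Q.IsHomogeneous 2 ∧ ∀ j, j ≠ i → eval (p j) Q = v j := by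
  intro i v
  obtain ⟨Q₁, Q₂, Q₃, hQ₁, hQ₂, hQ₃, hQ⟩ := hci
  classical
  have hsep : ∀ j : Fin 8, ∃ N : MvPolynomial (Fin 4) K,
      j ≠ i → (N.IsHomogeneous 2 ∧ eval (p j) N = 1 ∧
        ∀ k, k ≠ i → k ≠ j → eval (p k) N = 0) := by
    intro j
    by_cases hj : j ≠ i
    · obtain ⟨N, hN⟩ := sep hp hQ₁ hQ₂ hQ₃ hQ hj
      exact ⟨N, fun _ => hN⟩
    · exact ⟨0, fun h => absurd h hj⟩
  choose N hN using hsep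
  refine ⟨∑ j ∈ Finset.univ.erase i, C (v j) * N j, ?_, ?_⟩
  · apply MvPolynomial.IsHomogeneous.sum
    intro j hj
    have hji : j ≠ i := (Finset.mem_erase.mp hj).1
    simpa using (isHomogeneous_C _ (v j)).mul ((hN j hji).1)
  · intro k hki
    rw [map_sum, Finset.sum_eq_single k]
    · rw [eval_mul, eval_C, (hN k hki).2.1, mul_one]
    · intro j hj hjk
      have hji := (Finset.mem_erase.mp hj).1
      rw [eval_mul, eval_C, (hN j hji).2.2 k hki (Ne.symm hjk), mul_zero]
    · intro hk
      exact absurd (Finset.mem_erase.mpr ⟨hki, Finset.mem_univ k⟩) hk
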